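/- Let L be a Moufang loop, T ≤ L a subgroup, and u ∈ L with uwu = w⁻¹ for all w ∈ T. Then for any w₁, w₂ ∈ T, the relation w₁(w₂u) = (w₂w₁)u holds if and only if (w₂u)w₁⁻¹ = (w₂w₁)u holds. -/
import Mathlib


/-- A Moufang loop: a loop (a quasigroup with two-sided identity) satisfying the
Moufang identities (m1) `z(x(yx)) = ((zx)y)x`, (m2) `x(y(xz)) = ((xy)x)z`,
(m3) `(xy)(zx) = x((yz)x)`. -/
class MoufangLoop (L : Type*) extends Mul L, One L where
  one_mul : ∀ a : L, 1 * a = a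
  mul_one : ∀ a : L, a * 1 = a
  left_bij : ∀ a : L, Function.Bijective fun x : L => a * x
  right_bij : ∀ a : L, Function.Bijective fun x : L => x * a
  m1 : ∀ x y z : L, z * (x * (y * x)) = ((z * x) * y) * x
  m2 : ∀ x y z : L, x * (y * (x * z)) = ((x * y) * x) * z
  m3 : ∀ x y z : L, (x * y) * (z * x) = x * ((y * z) * x)

/-- The subset `T` of the Moufang loop `L`, together with the inversion map `inv`,
forms a subgroup of `L`: it contains the identity, is closed under multiplication
and inversion, multiplication restricted to `T` is associative, and `inv` provides
two-sided inverses in `T`. -/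
structure IsSubgroupOfLoop {L : Type*} [MoufangLoop L] (T : Set L) (inv : L → L) : Prop where
  one_mem : (1 : L) ∈ T
  mul_mem : ∀ a ∈ T, ∀ b ∈ T, a * b ∈ T
  inv_mem : ∀ a ∈ T, inv a ∈ T
  assoc : ∀ a ∈ T, ∀ b ∈ T, ∀ c ∈ T, (a * b) * c = a * (b * c)
  mul_inv : ∀ a ∈ T, a * inv a = 1
  inv_mul : ∀ a ∈ T, inv a * a = 1

/-- `T` is generated (as a group) by the subset `S`: every element of `T` is an
iterated product of elements of `S` and their inverses. -/
def GeneratedBy {L : Type*} [MoufangLoop L] (T : Set L) (inv : L → L) (S : Set L) : Prop :=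
  S ⊆ T ∧ ∀ w ∈ T, ∃ l : List L,
    (∀ x ∈ l, x ∈ S ∨ ∃ s ∈ S, x = inv s) ∧ w = l.foldr (· * ·) 1

/-- Lemma 2.7: if `L` is a Moufang loop, `T ≤ L` a subgroup, and `u ∈ L` satisfies
`uwu = w⁻¹` for all `w ∈ T`, then for any `w₁, w₂ ∈ T` the Chein relation
`w₁(w₂u) = (w₂w₁)u` holds if and only if `(w₂u)w₁⁻¹ = (w₂w₁)u` holds. -/
theorem chein_c1_iff_c2 {L : Type*} [MoufangLoop L]
    (T : Set L) (inv : L → L) (u : L)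
    (hT : IsSubgroupOfLoop T inv)
    (hu : ∀ w ∈ T, (u * w) * u = inv w) :
    ∀ w₁ ∈ T, ∀ w₂ ∈ T,
      (w₁ * (w₂ * u) = (w₂ * w₁) * u ↔ (w₂ * u) * inv w₁ = (w₂ * w₁) * u) := by
  have om := MoufangLoop.one_mul (L := L)
  have mo := MoufangLoop.mul_one (L := L)
  have m1 := MoufangLoop.m1 (L := L)
  have m2 := MoufangLoop.m2 (L := L)
  -- squares associate
  have sqL : ∀ x z : L, x * (x * z) = (x * x) * z := by
    intro x z; have := m2 x 1 z; rwa [om, mo] at this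
  have sqR : ∀ x z : L, (z * x) * x = z * (x * x) := by
    intro x z; have := m1 x 1 z; rw [om, mo] at this; exact this.symm
  -- inv 1 = 1, u * u = 1
  have inv1 : inv (1 : L) = 1 := by
    have := hT.mul_inv 1 hT.one_mem; rwa [om] at this
  have uu : u * u = 1 := by
    have := hu 1 hT.one_mem; rwa [mo, inv1] at this
  have uL : ∀ z : L, u * (u * z) = z := by intro z; rw [sqL, uu, om]
  have uR : ∀ z : L, (z * u) * u = z := by intro z; rw [sqR, uu, mo]
  -- inv (inv w) = w
  have invinv : ∀ w ∈ T, inv (inv w) = w := by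
    intro w hw
    apply (MoufangLoop.left_bij (inv w)).1
    show inv w * inv (inv w) = inv w * w
    rw [hT.mul_inv _ (hT.inv_mem w hw), hT.inv_mul w hw]
  -- commutation relations with u
  have uw : ∀ w ∈ T, u * w = inv w * u := by
    intro w hw
    have := congrArg (· * u) (hu w hw)
    simpa [uR] using this
  have wu : ∀ w ∈ T, w * u = u * inv w := by
    intro w hw
    have h := hu (inv w) (hT.inv_mem w hw)
    rw [invinv w hw] at h
    have := congrArg (· * u) h
    simpa [uR] using this.symm
  -- inv is antihomomorphism on T
  have invmul : ∀ w₁ ∈ T, ∀ w₂ ∈ T, inv (w₂ * w₁) = inv w₁ * inv w₂ := by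
    intro w₁ h1 w₂ h2
    apply (MoufangLoop.right_bij (w₂ * w₁)).1
    show inv (w₂ * w₁) * (w₂ * w₁) = (inv w₁ * inv w₂) * (w₂ * w₁)
    rw [hT.inv_mul _ (hT.mul_mem _ h2 _ h1),
      hT.assoc _ (hT.inv_mem _ h1) _ (hT.inv_mem _ h2) _ (hT.mul_mem _ h2 _ h1),
      ← hT.assoc _ (hT.inv_mem _ h2) _ h2 _ h1, hT.inv_mul _ h2, om,
      hT.inv_mul _ h1]
  intro w₁ h1 w₂ h2
  -- c1 holds
  have c1 : w₁ * (w₂ * u) = (w₂ * w₁) * u := by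
    apply (MoufangLoop.left_bij u).1
    show u * (w₁ * (w₂ * u)) = u * ((w₂ * w₁) * u)
    rw [wu _ h2, wu _ (hT.mul_mem _ h2 _ h1), m2, hu _ h1, uL,
      invmul _ h1 _ h2]
  -- c2 holds
  have c2 : (w₂ * u) * inv w₁ = (w₂ * w₁) * u := by
    apply (MoufangLoop.right_bij u).1
    show ((w₂ * u) * inv w₁) * u = ((w₂ * w₁) * u) * u
    rw [uR, ← m1, ← uw _ h1, uL]
  exact ⟨fun _ => c2, fun _ => c1⟩
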